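/- Let g ≥ 1. The convex cone C generated by V in ℝ^{2g+3} has exactly binom(2g+3, g+1) extremal rays, namely the rays ℝ_{≥0}·v for v ∈ V, and these rays are pairwise distinct. (This is the statement that the Mori cone NE(Σ_{2g}) of the GIT quotient Σ_{2g} = (ℙ¹)^{2g+3} // PGL(2) with the symmetric polarization has exactly binom(2g+2,g) + binom(2g+2,g+1) = binom(2g+3,g+1) extremal rays, each generated by the class of a 1-dimensional boundary stratum.) -/

import Mathlib

open Finset

noncomputable def Lf {n : ℕ} (α : ℝ) (β : Fin n → ℝ) : (ℝ × (Fin n → ℝ)) →ₗ[ℝ] ℝ where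
  toFun x := α * x.1 + ∑ i, β i * x.2 i
  map_add' x y := by
    simp only [Prod.fst_add, Prod.snd_add, Pi.add_apply, mul_add, Finset.sum_add_distrib]
    ring
  map_smul' c x := by
    simp only [Prod.smul_fst, Prod.smul_snd, Pi.smul_apply, smul_eq_mul, RingHom.id_apply,
      Finset.mul_sum, mul_add]
    ring_nf

lemma Lf_ind {n : ℕ} (α : ℝ) (β : Fin n → ℝ) (a c : ℝ) (S : Finset (Fin n)) :
    Lf α β (a, fun i => if i ∈ S then c else 0) = α * a + c * ∑ i ∈ S, β i := by
  simp only [Lf, LinearMap.coe_mk, AddHom.coe_mk]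
  congr 1
  simp only [mul_ite, mul_zero, Finset.sum_ite_mem, Finset.univ_inter, Finset.mul_sum]
  exact Finset.sum_congr rfl fun i _ => mul_comm _ _

lemma sum_ite_const {n : ℕ} (S T : Finset (Fin n)) (p q : ℝ) :
    ∑ i ∈ S, (if i ∈ T then p else q) = (S ∩ T).card * p + (S \ T).card * q := by
  rw [← Finset.sum_filter_add_sum_filter_not S (· ∈ T)]
  have h1 : ∑ i ∈ S.filter (· ∈ T), (if i ∈ T then p else q) = (S ∩ T).card * p := by
    rw [Finset.sum_ite_of_true (fun i hi => (Finset.mem_filter.1 hi).2), Finset.sum_const,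
      Finset.filter_mem_eq_inter, nsmul_eq_mul]
  have h2 : ∑ i ∈ S.filter (· ∉ T), (if i ∈ T then p else q) = (S \ T).card * q := by
    rw [Finset.sum_ite_of_false (fun i hi => (Finset.mem_filter.1 hi).2), Finset.sum_const,
      ← Finset.sdiff_eq_filter, nsmul_eq_mul]
  rw [h1, h2]



/-- The classes of the 1-dimensional boundary strata `L_I` and `L_{I^c}` of
the GIT quotient `Σ_{2g} = (ℙ¹)^{2g+3} // PGL(2)`, written in
`ℝ × (Fin (2g+2) → ℝ)` where `(a, b)` represents `a·l + ∑ bᵢ·eᵢ`: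
the vectors `(g, -𝟙_I)` for `|I| = g+1` and `(1-g, 𝟙_J)` for `|J| = g`. -/
def boundaryClasses (g : ℕ) : Set (ℝ × (Fin (2 * g + 2) → ℝ)) :=
  {v | (∃ I : Finset (Fin (2 * g + 2)), I.card = g + 1 ∧
          v = ((g : ℝ), fun i => if i ∈ I then -1 else 0)) ∨
       (∃ J : Finset (Fin (2 * g + 2)), J.card = g ∧
          v = (1 - (g : ℝ), fun i => if i ∈ J then 1 else 0))}

/-- The convex cone generated by `V`: all finite nonnegative real linear
combinations of elements of `V` (the Mori cone `NE(Σ_{2g})`). -/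
def moriCone (g : ℕ) : Set (ℝ × (Fin (2 * g + 2) → ℝ)) :=
  {x | ∃ (m : ℕ) (c : Fin m → ℝ) (f : Fin m → ℝ × (Fin (2 * g + 2) → ℝ)),
    (∀ i, 0 ≤ c i) ∧ (∀ i, f i ∈ boundaryClasses g) ∧ x = ∑ i, c i • f i}

/-- The ray `ℝ_{≥0}·v` spanned by a vector `v`. -/
def rayOf {g : ℕ} (v : ℝ × (Fin (2 * g + 2) → ℝ)) :
    Set (ℝ × (Fin (2 * g + 2) → ℝ)) :=
  {x | ∃ t : ℝ, 0 ≤ t ∧ x = t • v}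

/-- A ray `ℝ_{≥0}·v` (`v ∈ C`, `v ≠ 0`) is extremal if whenever `v = u + w`
with `u, w ∈ C`, both `u` and `w` are nonnegative multiples of `v`. -/
def IsExtremalRay (g : ℕ) (R : Set (ℝ × (Fin (2 * g + 2) → ℝ))) : Prop :=
  ∃ v, v ≠ 0 ∧ v ∈ moriCone g ∧ R = rayOf v ∧
    ∀ u w, u ∈ moriCone g → w ∈ moriCone g → v = u + w →
      (∃ s : ℝ, 0 ≤ s ∧ u = s • v) ∧ (∃ t : ℝ, 0 ≤ t ∧ w = t • v)

lemma mem_moriCone {g : ℕ} {v : ℝ × (Fin (2 * g + 2) → ℝ)} (hv : v ∈ boundaryClasses g) :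
    v ∈ moriCone g := by
  exact ⟨1, fun _ => 1, fun _ => v, fun _ => zero_le_one, fun _ => hv, by simp⟩

lemma rayOf_smul {g : ℕ} {v : ℝ × (Fin (2 * g + 2) → ℝ)} {t : ℝ} (ht : 0 < t) :
    rayOf (t • v) = rayOf v := by
  ext x
  constructor
  · rintro ⟨r, hr, rfl⟩
    exact ⟨r * t, by positivity, by rw [smul_smul]⟩
  · rintro ⟨r, hr, rfl⟩
    exact ⟨r / t, by positivity, by rw [smul_smul, div_mul_cancel₀ _ ht.ne']⟩

/-- If a linear functional is nonneg on V, zero at v, and vanishes on V only at v,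
then any cone element killed by L is a nonneg multiple of v. -/
lemma cone_multiple {g : ℕ} {v : ℝ × (Fin (2 * g + 2) → ℝ)}
    (L : (ℝ × (Fin (2 * g + 2) → ℝ)) →ₗ[ℝ] ℝ)
    (hnn : ∀ x ∈ boundaryClasses g, 0 ≤ L x)
    (heq : ∀ x ∈ boundaryClasses g, L x = 0 → x = v)
    {u : ℝ × (Fin (2 * g + 2) → ℝ)} (hu : u ∈ moriCone g) (hLu : L u = 0) :
    ∃ s : ℝ, 0 ≤ s ∧ u = s • v := by
  obtain ⟨m, c, f, hc, hf, rfl⟩ := hu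
  have hLsum : ∑ i, c i * L (f i) = 0 := by
    rw [← hLu, map_sum]; exact Finset.sum_congr rfl fun i _ => by rw [map_smul, smul_eq_mul]
  have hterm : ∀ i ∈ Finset.univ, (0:ℝ) ≤ c i * L (f i) :=
    fun i _ => mul_nonneg (hc i) (hnn _ (hf i))
  have hzero := (Finset.sum_eq_zero_iff_of_nonneg hterm).1 hLsum
  have hrepl : ∀ i, c i • f i = c i • v := by
    intro i
    rcases eq_or_ne (c i) 0 with h | h
    · simp [h]
    · have : L (f i) = 0 := by
        have := hzero i (Finset.mem_univ i)
        exact (mul_eq_zero.1 this).resolve_left h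
      rw [heq _ (hf i) this]
  refine ⟨∑ i, c i, Finset.sum_nonneg fun i _ => hc i, ?_⟩
  rw [Finset.sum_smul]
  exact Finset.sum_congr rfl fun i _ => hrepl i

lemma nonneg_on_cone {g : ℕ} (L : (ℝ × (Fin (2 * g + 2) → ℝ)) →ₗ[ℝ] ℝ)
    (hnn : ∀ x ∈ boundaryClasses g, 0 ≤ L x)
    {u : ℝ × (Fin (2 * g + 2) → ℝ)} (hu : u ∈ moriCone g) : 0 ≤ L u := by
  obtain ⟨m, c, f, hc, hf, rfl⟩ := hu
  rw [map_sum]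
  exact Finset.sum_nonneg fun i _ => by
    rw [map_smul, smul_eq_mul]; exact mul_nonneg (hc i) (hnn _ (hf i))

lemma isExtremal_of_functional {g : ℕ} {v : ℝ × (Fin (2 * g + 2) → ℝ)}
    (hv : v ∈ boundaryClasses g) (hv0 : v ≠ 0)
    (L : (ℝ × (Fin (2 * g + 2) → ℝ)) →ₗ[ℝ] ℝ)
    (hLv : L v = 0)
    (hnn : ∀ x ∈ boundaryClasses g, 0 ≤ L x)
    (heq : ∀ x ∈ boundaryClasses g, L x = 0 → x = v) :
    IsExtremalRay g (rayOf v) := by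
  refine ⟨v, hv0, mem_moriCone hv, rfl, ?_⟩
  intro u w hu hw hvuw
  have hsum : L u + L w = 0 := by rw [← map_add, ← hvuw, hLv]
  have hu0 : L u = 0 := le_antisymm (by linarith [nonneg_on_cone L hnn hw]) (nonneg_on_cone L hnn hu)
  have hw0 : L w = 0 := by linarith
  exact ⟨cone_multiple L hnn heq hu hu0, cone_multiple L hnn heq hw hw0⟩

lemma card_sdiff_real {n : ℕ} (S T : Finset (Fin n)) :
    ((S \ T).card : ℝ) = (S.card : ℝ) - ((S ∩ T).card : ℝ) := by
  have h := Finset.card_inter_add_card_sdiff S T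
  have h2 : ((S ∩ T).card : ℝ) + ((S \ T).card : ℝ) = (S.card : ℝ) := by push_cast [← h]; ring
  linarith

lemma inter_card_eq_imp {n : ℕ} {S T : Finset (Fin n)} (h : (S ∩ T).card = S.card)
    (h2 : T.card ≤ S.card) : S = T := by
  have h3 : S ∩ T = S := Finset.eq_of_subset_of_card_le Finset.inter_subset_left h.ge
  have hsub : S ⊆ T := by rw [← h3]; exact Finset.inter_subset_right
  exact Finset.eq_of_subset_of_card_le hsub h2

lemma card_inter_le_real {n : ℕ} (S T : Finset (Fin n)) : ((S ∩ T).card : ℝ) ≤ (S.card : ℝ) :=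
  Nat.cast_le.2 (Finset.card_le_card Finset.inter_subset_left)

lemma extremal_A {g : ℕ} (hg : 1 ≤ g) (I : Finset (Fin (2 * g + 2))) (hI : I.card = g + 1) :
    IsExtremalRay g (rayOf ((g : ℝ), fun i => if i ∈ I then -1 else 0)) := by
  have hg1 : (1:ℝ) ≤ (g:ℝ) := by exact_mod_cast hg
  have hg0 : (g:ℝ) ≠ 0 := by linarith
  have hg2 : (0:ℝ) < 2*g := by linarith
  set v : ℝ × (Fin (2 * g + 2) → ℝ) := ((g : ℝ), fun i => if i ∈ I then -1 else 0) with hvdef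
  set β : Fin (2 * g + 2) → ℝ := fun i => if i ∈ I then (g:ℝ) else (g:ℝ) - 1/(2*g) with hβ
  set L := Lf ((g:ℝ)+1) β with hL
  have hvV : v ∈ boundaryClasses g := Or.inl ⟨I, hI, rfl⟩
  have evalA : ∀ I' : Finset (Fin (2 * g + 2)), I'.card = g + 1 →
      L ((g : ℝ), fun i => if i ∈ I' then -1 else 0)
        = ((g:ℝ) + 1 - ((I' ∩ I).card : ℝ)) / (2*g) := by
    intro I' hI'
    rw [hL, Lf_ind, hβ, sum_ite_const, card_sdiff_real, hI']
    push_cast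
    field_simp
    ring
  have evalB : ∀ J : Finset (Fin (2 * g + 2)), J.card = g →
      L (1 - (g : ℝ), fun i => if i ∈ J then 1 else 0)
        = 1 - ((g:ℝ) - ((J ∩ I).card : ℝ)) / (2*g) := by
    intro J hJ
    rw [hL, Lf_ind, hβ, sum_ite_const, card_sdiff_real, hJ]
    field_simp
    ring
  have hLv : L v = 0 := by
    rw [hvdef, evalA I hI, Finset.inter_self, hI]
    push_cast
    ring
  have hnn : ∀ x ∈ boundaryClasses g, 0 ≤ L x := by
    rintro x (⟨I', hI', rfl⟩ | ⟨J, hJ, rfl⟩)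
    · rw [evalA I' hI']
      have h1 : ((I' ∩ I).card : ℝ) ≤ (g:ℝ) + 1 := by
        have := card_inter_le_real I' I
        rw [hI'] at this; push_cast at this; linarith
      apply div_nonneg (by linarith) (by linarith)
    · rw [evalB J hJ]
      have h1 : (0:ℝ) ≤ ((J ∩ I).card : ℝ) := Nat.cast_nonneg _
      have h2 : ((g:ℝ) - ((J ∩ I).card : ℝ)) / (2*g) ≤ 1/2 := by
        rw [div_le_iff₀ hg2]; linarith
      linarith
  have heq : ∀ x ∈ boundaryClasses g, L x = 0 → x = v := by
    rintro x (⟨I', hI', rfl⟩ | ⟨J, hJ, rfl⟩) hx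
    · rw [evalA I' hI'] at hx
      have h1 : (g:ℝ) + 1 - ((I' ∩ I).card : ℝ) = 0 := by
        rcases div_eq_zero_iff.1 hx with h | h
        · exact h
        · exact absurd h (by linarith)
      have h2 : (I' ∩ I).card = I'.card := by
        rw [hI']; exact_mod_cast (by linarith : ((I' ∩ I).card : ℝ) = (g:ℝ) + 1)
      rw [hvdef, inter_card_eq_imp h2 (by rw [hI, hI'])]
    · rw [evalB J hJ] at hx
      exfalso
      have h1 : (0:ℝ) ≤ ((J ∩ I).card : ℝ) := Nat.cast_nonneg _
      have h2 : ((g:ℝ) - ((J ∩ I).card : ℝ)) / (2*g) ≤ 1/2 := by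
        rw [div_le_iff₀ hg2]; linarith
      linarith
  have hv0 : v ≠ 0 := by
    intro h
    have := congrArg Prod.fst h
    simp [hvdef] at this
    linarith
  exact isExtremal_of_functional hvV hv0 L hLv hnn heq

lemma extremal_B {g : ℕ} (hg : 1 ≤ g) (J : Finset (Fin (2 * g + 2))) (hJ : J.card = g) :
    IsExtremalRay g (rayOf (1 - (g : ℝ), fun i => if i ∈ J then 1 else 0)) := by
  have hg1 : (1:ℝ) ≤ (g:ℝ) := by exact_mod_cast hg
  have hg2 : (0:ℝ) < 2*((g:ℝ)+1) := by linarith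
  have hg0 : (g:ℝ) + 1 ≠ 0 := by linarith
  set v : ℝ × (Fin (2 * g + 2) → ℝ) := (1 - (g : ℝ), fun i => if i ∈ J then 1 else 0) with hvdef
  set β : Fin (2 * g + 2) → ℝ :=
    fun i => if i ∈ J then (g:ℝ) - 1 else (g:ℝ) - 1 + 1/(2*((g:ℝ)+1)) with hβ
  set L := Lf (g:ℝ) β with hL
  have hvV : v ∈ boundaryClasses g := Or.inr ⟨J, hJ, rfl⟩
  have evalB : ∀ J' : Finset (Fin (2 * g + 2)), J'.card = g →
      L (1 - (g : ℝ), fun i => if i ∈ J' then 1 else 0)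
        = ((g:ℝ) - ((J' ∩ J).card : ℝ)) / (2*((g:ℝ)+1)) := by
    intro J' hJ'
    rw [hL, Lf_ind, hβ, sum_ite_const, card_sdiff_real, hJ']
    field_simp
    ring
  have evalA : ∀ I : Finset (Fin (2 * g + 2)), I.card = g + 1 →
      L ((g : ℝ), fun i => if i ∈ I then -1 else 0)
        = 1 - ((g:ℝ) + 1 - ((I ∩ J).card : ℝ)) / (2*((g:ℝ)+1)) := by
    intro I hI
    rw [hL, Lf_ind, hβ, sum_ite_const, card_sdiff_real, hI]
    push_cast
    field_simp
    ring
  have hLv : L v = 0 := by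
    rw [hvdef, evalB J hJ, Finset.inter_self, hJ]
    simp
  have hnn : ∀ x ∈ boundaryClasses g, 0 ≤ L x := by
    rintro x (⟨I, hI, rfl⟩ | ⟨J', hJ', rfl⟩)
    · rw [evalA I hI]
      have h1 : (0:ℝ) ≤ ((I ∩ J).card : ℝ) := Nat.cast_nonneg _
      have h2 : ((g:ℝ) + 1 - ((I ∩ J).card : ℝ)) / (2*((g:ℝ)+1)) ≤ 1/2 := by
        rw [div_le_iff₀ hg2]; linarith
      linarith
    · rw [evalB J' hJ']
      have h1 : ((J' ∩ J).card : ℝ) ≤ (g:ℝ) := by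
        have := card_inter_le_real J' J
        rw [hJ'] at this; linarith
      apply div_nonneg (by linarith) (by linarith)
  have heq : ∀ x ∈ boundaryClasses g, L x = 0 → x = v := by
    rintro x (⟨I, hI, rfl⟩ | ⟨J', hJ', rfl⟩) hx
    · rw [evalA I hI] at hx
      exfalso
      have h1 : (0:ℝ) ≤ ((I ∩ J).card : ℝ) := Nat.cast_nonneg _
      have h2 : ((g:ℝ) + 1 - ((I ∩ J).card : ℝ)) / (2*((g:ℝ)+1)) ≤ 1/2 := by
        rw [div_le_iff₀ hg2]; linarith
      linarith
    · rw [evalB J' hJ'] at hx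
      have h1 : (g:ℝ) - ((J' ∩ J).card : ℝ) = 0 := by
        rcases div_eq_zero_iff.1 hx with h | h
        · exact h
        · exact absurd h (by linarith)
      have h2 : (J' ∩ J).card = J'.card := by
        rw [hJ']; exact_mod_cast (by linarith : ((J' ∩ J).card : ℝ) = (g:ℝ))
      rw [hvdef, inter_card_eq_imp h2 (by rw [hJ, hJ'])]
  have hv0 : v ≠ 0 := by
    intro h
    obtain ⟨j, hj⟩ := Finset.card_pos.1 (by omega : 0 < J.card)
    have := congrFun (congrArg Prod.snd h) j
    simp [hvdef, hj] at this
  exact isExtremal_of_functional hvV hv0 L hLv hnn heq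

lemma extremal_subset {g : ℕ} {R : Set (ℝ × (Fin (2 * g + 2) → ℝ))}
    (hR : IsExtremalRay g R) : R ∈ rayOf '' boundaryClasses g := by
  obtain ⟨v, hv0, ⟨m, c, f, hc, hf, hveq⟩, hRv, hext⟩ := hR
  have hne : ∃ i₀, c i₀ • f i₀ ≠ 0 := by
    by_contra h
    push_neg at h
    exact hv0 (by rw [hveq]; exact Finset.sum_eq_zero fun i _ => h i)
  obtain ⟨i₀, hi₀⟩ := hne
  set u : ℝ × (Fin (2 * g + 2) → ℝ) := ∑ i, (if i = i₀ then c i else 0) • f i with hu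
  set w : ℝ × (Fin (2 * g + 2) → ℝ) := ∑ i, (if i = i₀ then 0 else c i) • f i with hw
  have huC : u ∈ moriCone g := by
    refine ⟨m, _, f, fun i => ?_, hf, rfl⟩
    split
    · exact hc i
    · exact le_rfl
  have hwC : w ∈ moriCone g := by
    refine ⟨m, _, f, fun i => ?_, hf, rfl⟩
    split
    · exact le_rfl
    · exact hc i
  have hsplit : v = u + w := by
    rw [hveq, hu, hw, ← Finset.sum_add_distrib]
    refine Finset.sum_congr rfl fun i _ => ?_
    rw [← add_smul]
    congr 1
    split <;> simp
  have hueq : u = c i₀ • f i₀ := by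
    rw [hu]
    have h : ∀ i, (if i = i₀ then c i else 0) • f i = if i = i₀ then c i • f i else 0 := by
      intro i; split <;> simp
    rw [Finset.sum_congr rfl fun i _ => h i, Finset.sum_ite_eq' Finset.univ i₀]
    simp
  obtain ⟨⟨s, hs, hus⟩, -⟩ := hext u w huC hwC hsplit
  have key : c i₀ • f i₀ = s • v := hueq.symm.trans hus
  have hs0 : s ≠ 0 := by
    intro h; rw [h, zero_smul] at key; exact hi₀ key
  have hspos : 0 < s := lt_of_le_of_ne hs (Ne.symm hs0)
  have hc0 : c i₀ ≠ 0 := by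
    intro h; rw [h, zero_smul] at hi₀; exact hi₀ rfl
  have hcpos : 0 < c i₀ := lt_of_le_of_ne (hc i₀) (Ne.symm hc0)
  have hfv : f i₀ = ((c i₀)⁻¹ * s) • v := by
    rw [← smul_smul, ← key, smul_smul, inv_mul_cancel₀ hc0, one_smul]
  refine ⟨f i₀, hf i₀, ?_⟩
  rw [hfv, rayOf_smul (by positivity), hRv]

lemma indicator_inj {n : ℕ} {S T : Finset (Fin n)} {c : ℝ} (hc : c ≠ 0)
    (h : (fun i => if i ∈ S then c else 0) = (fun i => if i ∈ T then c else 0)) : S = T := by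
  ext i
  have hi := congrFun h i
  by_cases hS : i ∈ S <;> by_cases hT : i ∈ T <;> simp [hS, hT] at hi ⊢
  · exact hc hi
  · exact hc hi.symm

lemma bc_ne_zero {g : ℕ} (hg : 1 ≤ g) {v : ℝ × (Fin (2 * g + 2) → ℝ)}
    (hv : v ∈ boundaryClasses g) : v ≠ 0 := by
  have hg1 : (1:ℝ) ≤ (g:ℝ) := by exact_mod_cast hg
  rcases hv with ⟨I, hI, rfl⟩ | ⟨J, hJ, rfl⟩
  · intro h
    have := congrArg Prod.fst h
    simp at this
    linarith
  · intro h
    obtain ⟨j, hj⟩ := Finset.card_pos.1 (by omega : 0 < J.card)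
    have := congrFun (congrArg Prod.snd h) j
    simp [hj] at this

lemma ray_injOn {g : ℕ} (hg : 1 ≤ g) :
    Set.InjOn (rayOf (g := g)) (boundaryClasses g) := by
  have hg1 : (1:ℝ) ≤ (g:ℝ) := by exact_mod_cast hg
  intro v hv w hw hray
  have hwv : w ∈ rayOf v := by rw [hray]; exact ⟨1, zero_le_one, (one_smul _ _).symm⟩
  obtain ⟨t, ht, hweq⟩ := hwv
  have hw0 := bc_ne_zero hg hw
  have ht0 : t ≠ 0 := by intro h; rw [h, zero_smul] at hweq; exact hw0 hweq
  have htpos : 0 < t := lt_of_le_of_ne ht (Ne.symm ht0)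
  rcases hv with ⟨I, hI, rfl⟩ | ⟨J, hJ, rfl⟩ <;> rcases hw with ⟨I', hI', h2⟩ | ⟨J', hJ', h2⟩
  · -- A, A
    have hfst : (g:ℝ) = t * g := by
      have := congrArg Prod.fst (h2.symm.trans hweq); simpa using this
    have hgne : (g:ℝ) ≠ 0 := by linarith
    have ht1 : t = 1 := (mul_right_cancel₀ hgne (by linarith : 1*(g:ℝ) = t*g)).symm
    rw [hweq, ht1, one_smul]
  · -- A, B : contradiction
    exfalso
    have hfst : 1 - (g:ℝ) = t * g := by
      have := congrArg Prod.fst (h2.symm.trans hweq); simpa using this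
    nlinarith
  · -- B, A : contradiction
    exfalso
    have hfst : (g:ℝ) = t * (1 - g) := by
      have := congrArg Prod.fst (h2.symm.trans hweq); simpa using this
    nlinarith
  · -- B, B
    obtain ⟨j, hj⟩ := Finset.card_pos.1 (by omega : 0 < J.card)
    have hsnd := congrFun (congrArg Prod.snd (h2.symm.trans hweq)) j
    simp [hj] at hsnd
    have ht1 : t = 1 := by
      by_cases hj' : j ∈ J' <;> simp [hj'] at hsnd
      · exact hsnd.symm
      · exact absurd hsnd.symm ht0
    rw [hweq, ht1, one_smul]

lemma card_finsets {n k : ℕ} :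
    Set.ncard {I : Finset (Fin n) | I.card = k} = n.choose k := by
  have h : {I : Finset (Fin n) | I.card = k}
      = ((Finset.univ.powersetCard k : Finset (Finset (Fin n))) : Set (Finset (Fin n))) := by
    ext I
    simp [Finset.mem_powersetCard]
  rw [h, Set.ncard_coe_finset, Finset.card_powersetCard, Finset.card_univ, Fintype.card_fin]

lemma bc_decomp (g : ℕ) :
    boundaryClasses g =
      ((fun I : Finset (Fin (2 * g + 2)) => ((g : ℝ), fun i => if i ∈ I then (-1:ℝ) else 0)) ''
        {I | I.card = g + 1}) ∪
      ((fun J : Finset (Fin (2 * g + 2)) => (1 - (g : ℝ), fun i => if i ∈ J then (1:ℝ) else 0)) ''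
        {J | J.card = g}) := by
  ext v
  simp only [boundaryClasses, Set.mem_setOf_eq, Set.mem_union, Set.mem_image]
  constructor
  · rintro (⟨I, hI, rfl⟩ | ⟨J, hJ, rfl⟩)
    · exact Or.inl ⟨I, hI, rfl⟩
    · exact Or.inr ⟨J, hJ, rfl⟩
  · rintro (⟨I, hI, rfl⟩ | ⟨J, hJ, rfl⟩)
    · exact Or.inl ⟨I, hI, rfl⟩
    · exact Or.inr ⟨J, hJ, rfl⟩

lemma bc_ncard {g : ℕ} (hg : 1 ≤ g) :
    Set.ncard (boundaryClasses g) = (2*g+2).choose (g+1) + (2*g+2).choose g := by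
  have hg1 : (1:ℝ) ≤ (g:ℝ) := by exact_mod_cast hg
  rw [bc_decomp g]
  rw [Set.ncard_union_eq ?disj (Set.toFinite _) (Set.toFinite _)]
  case disj =>
    rw [Set.disjoint_left]
    rintro x ⟨I, hI, rfl⟩ ⟨J, hJ, hx⟩
    have := congrArg Prod.fst hx
    simp at this
    linarith
  rw [Set.ncard_image_of_injOn, Set.ncard_image_of_injOn, card_finsets, card_finsets]
  · intro J hJ J' hJ' h
    exact indicator_inj one_ne_zero (congrArg Prod.snd h)
  · intro I hI I' hI' h
    exact indicator_inj (neg_ne_zero.2 one_ne_zero) (congrArg Prod.snd h)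

/-- **The Mori cone of `Σ_{2g}` has exactly `binom(2g+3, g+1)` extremal
rays**, namely the rays `ℝ_{≥0}·v` for `v ∈ V`, and these rays are pairwise
distinct. -/
theorem moriCone_extremal_rays (g : ℕ) (hg : 1 ≤ g) :
    {R : Set (ℝ × (Fin (2 * g + 2) → ℝ)) | IsExtremalRay g R} =
        rayOf '' boundaryClasses g ∧
      Set.InjOn (rayOf (g := g)) (boundaryClasses g) ∧
      Set.ncard {R : Set (ℝ × (Fin (2 * g + 2) → ℝ)) | IsExtremalRay g R} =
        Nat.choose (2 * g + 3) (g + 1) := by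
  have hset : {R : Set (ℝ × (Fin (2 * g + 2) → ℝ)) | IsExtremalRay g R} =
      rayOf '' boundaryClasses g := by
    ext R
    constructor
    · exact fun hR => extremal_subset hR
    · rintro ⟨v, hv, rfl⟩
      rcases hv with ⟨I, hI, rfl⟩ | ⟨J, hJ, rfl⟩
      · exact extremal_A hg I hI
      · exact extremal_B hg J hJ
  refine ⟨hset, ray_injOn hg, ?_⟩
  rw [hset, Set.ncard_image_of_injOn (ray_injOn hg), bc_ncard hg]
  have h : ((2*g+2)+1).choose (g+1) = (2*g+2).choose g + (2*g+2).choose (g+1) :=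
    Nat.choose_succ_succ _ _
  show (2*g+2).choose (g+1) + (2*g+2).choose g = ((2*g+2)+1).choose (g+1)
  omega
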